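/- arXiv:1802.07817 — 2 statements merged into one kernel-verified Lean document; each statement's English description precedes it below -/
import Mathlib

section
/- Sequential consistency length mechanism (property S3): if a client records the length ℓ at which its appended record r was placed (r is at index ℓ−1 of the server's sequence), and later receives from any server a sequence V with |V| ≥ ℓ, where all server sequences are dedup folds over prefixes of a common delivery order, then r ∈ V. -/
def dedupFold {α : Type} [DecidableEq α] (D : List α) : List α :=
  D.foldl (fun acc r => if r ∈ acc then acc else acc ++ [r]) []

private lemma foldl_prefix {α : Type} [DecidableEq α] :
    ∀ (L acc : List α), acc <+: L.foldl (fun acc r => if r ∈ acc then acc else acc ++ [r]) acc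
  | [], acc => List.prefix_refl acc
  | x :: L, acc => by
    simp only [List.foldl_cons]
    refine List.IsPrefix.trans ?_ (foldl_prefix L _)
    by_cases h : x ∈ acc <;> simp [h]

private lemma dedupFold_prefix {α : Type} [DecidableEq α] (D : List α) {k1 k2 : ℕ}
    (h : k1 ≤ k2) : dedupFold (D.take k1) <+: dedupFold (D.take k2) := by
  have : D.take k2 = D.take k1 ++ (D.drop k1).take (k2 - k1) := by
    rw [← List.take_add]
    congr 1
    omega
  rw [this]
  unfold dedupFold
  rw [List.foldl_append]
  exact foldl_prefix _ _

private lemma prefix_get? {α : Type} {A B : List α} (h : A <+: B) {i : ℕ}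
    (hi : i < A.length) : B[i]? = A[i]? := by
  obtain ⟨t, rfl⟩ := h
  rw [List.getElem?_append_left hi]

theorem length_mechanism_S3 {α : Type} [DecidableEq α]
    (D : List α) (k1 k2 : ℕ) (r : α) (ℓ : ℕ) (hℓ : 1 ≤ ℓ)
    (S1 V : List α)
    (hS1 : S1 = dedupFold (D.take k1)) (hV : V = dedupFold (D.take k2))
    (hlen1 : ℓ ≤ S1.length) (hidx : S1[ℓ - 1]? = some r)
    (hlenV : ℓ ≤ V.length) :
    V[ℓ - 1]? = some r ∧ r ∈ V := by
  have hmain : V[ℓ - 1]? = some r := by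
    rcases le_total k1 k2 with h | h
    · have hp : S1 <+: V := hS1 ▸ hV ▸ dedupFold_prefix D h
      rw [prefix_get? hp (by omega)]
      exact hidx
    · have hp : V <+: S1 := hS1 ▸ hV ▸ dedupFold_prefix D h
      rw [← prefix_get? hp (by omega)]
      exact hidx
  exact ⟨hmain, List.mem_of_getElem? hmain⟩
end

section
/- Sequential consistency property S4 via lengths: if gets from the same process return sequences V1 then V2, both are dedup folds over prefixes of a common delivery order, and the client enforces |V2| ≥ |V1| (by passing the length along), then V1 is a prefix of V2. -/
lemma dedupFold_aux_prefix {α : Type} [DecidableEq α] (l : List α) (acc : List α) :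
    acc <+: l.foldl (fun acc r => if r ∈ acc then acc else acc ++ [r]) acc := by
  induction l generalizing acc with
  | nil => simp
  | cons x xs ih =>
    simp only [List.foldl_cons]
    refine List.IsPrefix.trans ?_ (ih _)
    split
    · exact List.prefix_refl _
    · exact ⟨[x], rfl⟩

lemma dedupFold_mono {α : Type} [DecidableEq α] {l1 l2 : List α} (h : l1 <+: l2) :
    dedupFold l1 <+: dedupFold l2 := by
  obtain ⟨t, rfl⟩ := h
  unfold dedupFold
  rw [List.foldl_append]
  exact dedupFold_aux_prefix t _

theorem length_mechanism_S4 {α : Type} [DecidableEq α]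
    (D : List α) (k1 k2 : ℕ) (V1 V2 : List α)
    (h1 : V1 = dedupFold (D.take k1)) (h2 : V2 = dedupFold (D.take k2))
    (hlen : V1.length ≤ V2.length) :
    V1 <+: V2 := by
  subst h1 h2
  rcases le_total k1 k2 with h | h
  · exact dedupFold_mono (List.take_prefix_take_left (l := D) h)
  · have h21 := dedupFold_mono (List.take_prefix_take_left (l := D) h)
    exact (h21.eq_of_length_le hlen) ▸ List.prefix_refl _
end
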